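/- Conversely, if F ∈ ℂ[[w_1,w_2,w_3]] satisfies (1−w_1)∂F/∂w_1 + (1−w_2)∂F/∂w_2 + w_3(1−w_3)∂F/∂w_3 = (1+w_3)F, then there is a power series H(x,y) ∈ ℂ[[x,y]] with F(w_1,w_2,w_3) = H((w_1−w_2)/(1−w_2), w_3(1−w_2)/(1−w_3))/((1−w_2)(1−w_3)); explicitly H(x,y) = ((1)^2/(1+y))·F(x, 0, y/(1+y)) suitably interpreted, via the substitution H(x,y) = (1−z)^2/(1+y−z) · F(x+z−xz, z, y/(1+y−z)) evaluated at z = 0. -/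

import Mathlib

open MvPowerSeries

/-- Formal partial derivative of a power series in three variables. -/
noncomputable def pderiv3 (i : Fin 3) (F : MvPowerSeries (Fin 3) ℂ) :
    MvPowerSeries (Fin 3) ℂ :=
  fun m => ((m i : ℂ) + 1) * coeff (m + Finsupp.single i 1) F

/-- Composition `H(f,g)` of a two-variable power series `H` with two three-variable power
series `f`, `g` (intended for `f`, `g` with zero constant term, in which case the coefficient
of a monomial `m` only receives contributions from `f^i g^j` with `i + j ≤ deg m`). -/
noncomputable def comp2 (H : MvPowerSeries (Fin 2) ℂ) (f g : MvPowerSeries (Fin 3) ℂ) :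
    MvPowerSeries (Fin 3) ℂ :=
  fun m =>
    ∑ p ∈ Finset.range (m.sum (fun _ e => e) + 1) ×ˢ
        Finset.range (m.sum (fun _ e => e) + 1),
      coeff (Finsupp.single 0 p.1 + Finsupp.single 1 p.2) H *
        coeff m (f ^ p.1 * g ^ p.2)

/-- The power series `(w₁ - w₂)/(1 - w₂)`. -/
noncomputable def subx : MvPowerSeries (Fin 3) ℂ := (X 0 - X 1) * (1 - X 1)⁻¹

/-- The power series `w₃(1 - w₂)/(1 - w₃)`. -/
noncomputable def suby : MvPowerSeries (Fin 3) ℂ := X 2 * (1 - X 1) * (1 - X 2)⁻¹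

/-- `F(w₁,w₂,w₃) = H((w₁-w₂)/(1-w₂), w₃(1-w₂)/(1-w₃)) / ((1-w₂)(1-w₃))`. -/
noncomputable def FofH (H : MvPowerSeries (Fin 2) ℂ) : MvPowerSeries (Fin 3) ℂ :=
  ((1 - X 1) * (1 - X 2))⁻¹ * comp2 H subx suby

abbrev dg (m : Fin 3 →₀ ℕ) : ℕ := m.sum fun _ e => e

lemma dg_add (u v : Fin 3 →₀ ℕ) : dg (u + v) = dg u + dg v :=
  Finsupp.sum_add_index' (fun _ => rfl) (fun _ _ _ => rfl)

lemma dg_pos {u : Fin 3 →₀ ℕ} (hu : u ≠ 0) : 0 < dg u := by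
  rcases Nat.eq_zero_or_pos (dg u) with h | h
  · exfalso
    apply hu
    ext a
    by_cases ha : a ∈ u.support
    · exact Finset.sum_eq_zero_iff.mp h a ha
    · simpa using Finsupp.notMem_support_iff.mp ha
  · exact h

lemma coeff_pderiv3 (i : Fin 3) (f : MvPowerSeries (Fin 3) ℂ) (m : Fin 3 →₀ ℕ) :
    coeff m (pderiv3 i f) = ((m i : ℂ) + 1) * coeff (m + Finsupp.single i 1) f := rfl

-- vanishing lemma
lemma coeff_list_prod_mul (l : List (MvPowerSeries (Fin 3) ℂ))
    (hl : ∀ x ∈ l, (constantCoeff (σ := Fin 3) (R := ℂ)) x = 0) (h : MvPowerSeries (Fin 3) ℂ)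
    (m : Fin 3 →₀ ℕ) (hm : dg m < l.length) :
    coeff m (l.prod * h) = 0 := by
  induction l generalizing m h with
  | nil => simp at hm
  | cons f t ih =>
    rw [List.prod_cons, mul_assoc, coeff_mul]
    apply Finset.sum_eq_zero
    rintro ⟨u, v⟩ hp
    rw [Finset.HasAntidiagonal.mem_antidiagonal] at hp
    by_cases hu : u = 0
    · have : coeff u f = 0 := by
        subst hu; exact hl f (List.mem_cons_self)
      simp [this]
    · have hv : dg v < t.length := by
        have hd : dg u + dg v = dg m := by rw [← dg_add, hp]
        have := dg_pos hu
        simp only [List.length_cons] at hm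
        omega
      rw [ih (fun x hx => hl x (List.mem_cons_of_mem _ hx)) _ _ hv, mul_zero]

lemma coeff_pow_mul_pow {f g : MvPowerSeries (Fin 3) ℂ}
    (hf : (constantCoeff (σ := Fin 3) (R := ℂ)) f = 0) (hg : (constantCoeff (σ := Fin 3) (R := ℂ)) g = 0)
    {p q : ℕ} {m : Fin 3 →₀ ℕ} (hm : dg m < p + q) :
    coeff m (f ^ p * g ^ q) = 0 := by
  have h := coeff_list_prod_mul (List.replicate p f ++ List.replicate q g)
    (by
      intro x hx
      rcases List.mem_append.mp hx with hx | hx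
      · rw [List.eq_of_mem_replicate hx]; exact hf
      · rw [List.eq_of_mem_replicate hx]; exact hg) 1 m
    (by simpa using hm)
  simpa using h

lemma key_sum (i : Fin 3) (f g : MvPowerSeries (Fin 3) ℂ) (m : Fin 3 →₀ ℕ) :
    ∑ p ∈ Finset.HasAntidiagonal.antidiagonal (m + Finsupp.single i 1),
        ((p.2 : Fin 3 →₀ ℕ) i : ℂ) * (coeff p.1 f * coeff p.2 g) =
      ∑ p ∈ Finset.HasAntidiagonal.antidiagonal m,
        coeff p.1 f * (((p.2 : Fin 3 →₀ ℕ) i : ℂ) + 1) * coeff (p.2 + Finsupp.single i 1) g := by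
  classical
  rw [← Finset.sum_filter_of_ne
    (p := fun p : (Fin 3 →₀ ℕ) × (Fin 3 →₀ ℕ) => p.2 i ≠ 0)
    (by
      rintro ⟨u, v⟩ _ hne
      simp only []
      intro h0
      apply hne
      rw [h0]
      push_cast
      ring)]
  refine Finset.sum_nbij' (fun p => (p.1, p.2 - Finsupp.single i 1))
    (fun p => (p.1, p.2 + Finsupp.single i 1)) ?_ ?_ ?_ ?_ ?_
  · rintro ⟨u, v⟩ hp
    simp only [Finset.mem_filter, Finset.HasAntidiagonal.mem_antidiagonal] at hp ⊢
    obtain ⟨huv, hv⟩ := hp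
    have hle : Finsupp.single i 1 ≤ v := by
      rw [Finsupp.single_le_iff]
      omega
    have : u + (v - Finsupp.single i 1) + Finsupp.single i 1 = m + Finsupp.single i 1 := by
      rw [add_assoc, tsub_add_cancel_of_le hle, huv]
    exact add_right_cancel this
  · rintro ⟨u, v⟩ hp
    simp only [Finset.HasAntidiagonal.mem_antidiagonal] at hp
    simp only [Finset.mem_filter, Finset.HasAntidiagonal.mem_antidiagonal]
    constructor
    · rw [← add_assoc, hp]
    · simp [Finsupp.add_apply, Finsupp.single_apply]
  · rintro ⟨u, v⟩ hp
    simp only [Finset.mem_filter, Finset.HasAntidiagonal.mem_antidiagonal] at hp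
    have hle : Finsupp.single i 1 ≤ v := by
      rw [Finsupp.single_le_iff]; omega
    simp [tsub_add_cancel_of_le hle]
  · rintro ⟨u, v⟩ _
    simp
  · rintro ⟨u, v⟩ hp
    simp only [Finset.mem_filter, Finset.HasAntidiagonal.mem_antidiagonal] at hp
    obtain ⟨huv, hv⟩ := hp
    have hle : Finsupp.single i 1 ≤ v := by
      rw [Finsupp.single_le_iff]; omega
    have hvi : (((v - Finsupp.single i 1 : Fin 3 →₀ ℕ) i : ℕ) : ℂ) + 1 = (v i : ℂ) := by
      rw [Finsupp.tsub_apply, Finsupp.single_apply, if_pos rfl]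
      have h1 : v i - 1 + 1 = v i := by omega
      rw [← h1]
      push_cast
      ring
    rw [tsub_add_cancel_of_le hle, hvi]
    ring

lemma pderiv3_mul (i : Fin 3) (f g : MvPowerSeries (Fin 3) ℂ) :
    pderiv3 i (f * g) = f * pderiv3 i g + g * pderiv3 i f := by
  classical
  apply MvPowerSeries.ext
  intro m
  rw [map_add, coeff_pderiv3, coeff_mul, coeff_mul, coeff_mul, Finset.mul_sum]
  have expand : ∀ p ∈ Finset.HasAntidiagonal.antidiagonal (m + Finsupp.single i 1),
      ((m i : ℂ) + 1) * (coeff p.1 f * coeff p.2 g) =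
        ((p.1 : Fin 3 →₀ ℕ) i : ℂ) * (coeff p.1 f * coeff p.2 g) +
        ((p.2 : Fin 3 →₀ ℕ) i : ℂ) * (coeff p.1 f * coeff p.2 g) := by
    rintro ⟨u, v⟩ hp
    rw [Finset.HasAntidiagonal.mem_antidiagonal] at hp
    have : u i + v i = m i + 1 := by
      rw [← Finsupp.add_apply, hp, Finsupp.add_apply, Finsupp.single_apply, if_pos rfl]
    have hc : (m i : ℂ) + 1 = (u i : ℂ) + (v i : ℂ) := by
      have h2 : ((m i + 1 : ℕ) : ℂ) = ((u i + v i : ℕ) : ℂ) := by rw [this]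
      push_cast at h2
      linear_combination h2
    rw [hc]; ring
  rw [Finset.sum_congr rfl expand, Finset.sum_add_distrib]
  have h2 := key_sum i f g m
  have h1 : ∑ p ∈ Finset.HasAntidiagonal.antidiagonal (m + Finsupp.single i 1),
      ((p.1 : Fin 3 →₀ ℕ) i : ℂ) * (coeff p.1 f * coeff p.2 g) =
      ∑ p ∈ Finset.HasAntidiagonal.antidiagonal m,
        coeff p.1 g * (((p.2 : Fin 3 →₀ ℕ) i : ℂ) + 1) * coeff (p.2 + Finsupp.single i 1) f := by
    have swap : ∑ p ∈ Finset.HasAntidiagonal.antidiagonal (m + Finsupp.single i 1),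
        ((p.1 : Fin 3 →₀ ℕ) i : ℂ) * (coeff p.1 f * coeff p.2 g) =
        ∑ p ∈ Finset.HasAntidiagonal.antidiagonal (m + Finsupp.single i 1),
        ((p.2 : Fin 3 →₀ ℕ) i : ℂ) * (coeff p.1 g * coeff p.2 f) := by
      refine Finset.sum_nbij' Prod.swap Prod.swap ?_ ?_ ?_ ?_ ?_ <;>
        rintro ⟨u, v⟩ hp <;>
        simp only [Finset.HasAntidiagonal.mem_antidiagonal, Prod.swap_prod_mk] at hp ⊢
      all_goals first
        | (rw [add_comm]; exact hp)
        | rfl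
        | ring
    rw [swap, key_sum i g f m]
  rw [h1, h2]
  rw [add_comm]
  congr 1
  · apply Finset.sum_congr rfl
    intro p _
    rw [coeff_pderiv3]
    ring
  · apply Finset.sum_congr rfl
    intro p _
    rw [coeff_pderiv3]
    ring

lemma pderiv3_add (i : Fin 3) (f g : MvPowerSeries (Fin 3) ℂ) :
    pderiv3 i (f + g) = pderiv3 i f + pderiv3 i g := by
  apply MvPowerSeries.ext
  intro m
  rw [map_add, coeff_pderiv3, coeff_pderiv3, coeff_pderiv3, map_add]
  ring

lemma pderiv3_sub (i : Fin 3) (f g : MvPowerSeries (Fin 3) ℂ) :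
    pderiv3 i (f - g) = pderiv3 i f - pderiv3 i g := by
  apply MvPowerSeries.ext
  intro m
  rw [map_sub, coeff_pderiv3, coeff_pderiv3, coeff_pderiv3, map_sub]
  ring

lemma pderiv3_zero (i : Fin 3) : pderiv3 i (0 : MvPowerSeries (Fin 3) ℂ) = 0 := by
  apply MvPowerSeries.ext
  intro m
  rw [coeff_pderiv3]
  simp

lemma pderiv3_one (i : Fin 3) : pderiv3 i (1 : MvPowerSeries (Fin 3) ℂ) = 0 := by
  apply MvPowerSeries.ext
  intro m
  rw [coeff_pderiv3]
  classical
  rw [coeff_one, if_neg, mul_zero, map_zero]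
  intro h
  have := congrArg (fun n : Fin 3 →₀ ℕ => n i) h
  simp [Finsupp.single_apply] at this

lemma pderiv3_X (i j : Fin 3) :
    pderiv3 i (X j : MvPowerSeries (Fin 3) ℂ) = if i = j then 1 else 0 := by
  classical
  apply MvPowerSeries.ext
  intro m
  rw [coeff_pderiv3, coeff_X]
  by_cases hij : i = j
  · subst hij
    by_cases hm : m = 0
    · subst hm
      simp
    · rw [if_neg, if_pos rfl, mul_zero]
      · rw [coeff_one, if_neg hm]
      · intro h
        apply hm
        have := add_right_cancel (h.trans (zero_add (Finsupp.single i 1)).symm)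
        exact this
  · rw [if_neg, mul_zero, if_neg hij, map_zero]
    intro h
    have := congrArg (fun n : Fin 3 →₀ ℕ => n i) h
    simp [Finsupp.single_apply, Ne.symm hij] at this

lemma pderiv3_C (i : Fin 3) (a : ℂ) :
    pderiv3 i (C (σ := Fin 3) (R := ℂ) a) = 0 := by
  classical
  apply MvPowerSeries.ext
  intro m
  rw [coeff_pderiv3, coeff_C, if_neg, mul_zero, map_zero]
  intro h
  have := congrArg (fun n : Fin 3 →₀ ℕ => n i) h
  simp [Finsupp.single_apply] at this


/-- The differential operator of the PDE. -/
noncomputable def Dop (f : MvPowerSeries (Fin 3) ℂ) : MvPowerSeries (Fin 3) ℂ :=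
  (1 - X 0) * pderiv3 0 f + (1 - X 1) * pderiv3 1 f + X 2 * (1 - X 2) * pderiv3 2 f

lemma Dop_add (f g : MvPowerSeries (Fin 3) ℂ) : Dop (f + g) = Dop f + Dop g := by
  simp only [Dop, pderiv3_add]; ring

lemma Dop_sub (f g : MvPowerSeries (Fin 3) ℂ) : Dop (f - g) = Dop f - Dop g := by
  simp only [Dop, pderiv3_sub]; ring

lemma Dop_zero : Dop (0 : MvPowerSeries (Fin 3) ℂ) = 0 := by
  simp only [Dop, pderiv3_zero]; ring

lemma Dop_one : Dop (1 : MvPowerSeries (Fin 3) ℂ) = 0 := by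
  simp only [Dop, pderiv3_one]; ring

lemma Dop_mul (f g : MvPowerSeries (Fin 3) ℂ) :
    Dop (f * g) = f * Dop g + g * Dop f := by
  simp only [Dop, pderiv3_mul]; ring

lemma Dop_C_mul (a : ℂ) (f : MvPowerSeries (Fin 3) ℂ) :
    Dop (C (σ := Fin 3) (R := ℂ) a * f) = C (σ := Fin 3) (R := ℂ) a * Dop f := by
  rw [Dop_mul]
  simp only [Dop, pderiv3_C]
  ring

lemma Dop_X0 : Dop (X 0 : MvPowerSeries (Fin 3) ℂ) = 1 - X 0 := by
  have h0 : ((0:Fin 3) = 0) = (True) := by decide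
  have h1 : ((1:Fin 3) = 0) = (False) := by decide
  have h2 : ((2:Fin 3) = 0) = (False) := by decide
  simp only [Dop, pderiv3_X, h0, h1, h2, if_true, if_false]
  ring

lemma Dop_X1 : Dop (X 1 : MvPowerSeries (Fin 3) ℂ) = 1 - X 1 := by
  have h0 : ((0:Fin 3) = 1) = (False) := by decide
  have h1 : ((1:Fin 3) = 1) = (True) := by decide
  have h2 : ((2:Fin 3) = 1) = (False) := by decide
  simp only [Dop, pderiv3_X, h0, h1, h2, if_true, if_false]
  ring

lemma Dop_X2 : Dop (X 2 : MvPowerSeries (Fin 3) ℂ) = X 2 * (1 - X 2) := by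
  have h0 : ((0:Fin 3) = 2) = (False) := by decide
  have h1 : ((1:Fin 3) = 2) = (False) := by decide
  have h2 : ((2:Fin 3) = 2) = (True) := by decide
  simp only [Dop, pderiv3_X, h0, h1, h2, if_true, if_false]
  ring

-- the inverse series
noncomputable abbrev Vs : MvPowerSeries (Fin 3) ℂ := (1 - X 1)⁻¹
noncomputable abbrev Ws : MvPowerSeries (Fin 3) ℂ := (1 - X 2)⁻¹
noncomputable abbrev Us : MvPowerSeries (Fin 3) ℂ := ((1 - X 1) * (1 - X 2))⁻¹

lemma constCoeff_one_sub_X (j : Fin 3) :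
    (constantCoeff (σ := Fin 3) (R := ℂ)) (1 - X j) = 1 := by
  rw [map_sub, map_one, constantCoeff_X, sub_zero]

lemma hV : (1 - X 1) * Vs = 1 :=
  MvPowerSeries.mul_inv_cancel _ (by rw [constCoeff_one_sub_X]; norm_num)

lemma hW : (1 - X 2) * Ws = 1 :=
  MvPowerSeries.mul_inv_cancel _ (by rw [constCoeff_one_sub_X]; norm_num)

lemma hU : ((1 - X 1) * (1 - X 2)) * Us = 1 :=
  MvPowerSeries.mul_inv_cancel _ (by
    rw [map_mul, constCoeff_one_sub_X, constCoeff_one_sub_X]; norm_num)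

lemma Dop_one_sub_X1 : Dop (1 - X 1 : MvPowerSeries (Fin 3) ℂ) = -(1 - X 1) := by
  rw [Dop_sub, Dop_one, Dop_X1]; ring

lemma Dop_one_sub_X2 : Dop (1 - X 2 : MvPowerSeries (Fin 3) ℂ) = -(X 2 * (1 - X 2)) := by
  rw [Dop_sub, Dop_one, Dop_X2]; ring

lemma Dop_V : Dop Vs = Vs := by
  have h0 : (1 - X 1) * Dop Vs + Vs * Dop (1 - X 1) = 0 := by
    rw [← Dop_mul, hV, Dop_one]
  rw [Dop_one_sub_X1] at h0
  have h1 : (1 - X 1) * Dop Vs = Vs * (1 - X 1) := by linear_combination h0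
  calc Dop Vs = (Vs * (1 - X 1)) * Dop Vs := by rw [mul_comm Vs, hV, one_mul]
    _ = Vs * ((1 - X 1) * Dop Vs) := by ring
    _ = Vs * (Vs * (1 - X 1)) := by rw [h1]
    _ = Vs := by rw [mul_comm Vs (1 - X 1), hV, mul_one]

lemma Dop_W : Dop Ws = X 2 * Ws := by
  have h0 : (1 - X 2) * Dop Ws + Ws * Dop (1 - X 2) = 0 := by
    rw [← Dop_mul, hW, Dop_one]
  rw [Dop_one_sub_X2] at h0
  have h1 : (1 - X 2) * Dop Ws = Ws * (X 2 * (1 - X 2)) := by linear_combination h0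
  calc Dop Ws = (Ws * (1 - X 2)) * Dop Ws := by rw [mul_comm Ws, hW, one_mul]
    _ = Ws * ((1 - X 2) * Dop Ws) := by ring
    _ = Ws * (Ws * (X 2 * (1 - X 2))) := by rw [h1]
    _ = X 2 * Ws * ((1 - X 2) * Ws) := by ring
    _ = X 2 * Ws := by rw [hW, mul_one]

lemma Dop_U : Dop Us = (1 + X 2) * Us := by
  have hA : Dop ((1 - X 1) * (1 - X 2)) = -((1 - X 1) * (1 - X 2) * (1 + X 2)) := by
    rw [Dop_mul, Dop_one_sub_X1, Dop_one_sub_X2]; ring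
  have h0 : ((1 - X 1) * (1 - X 2)) * Dop Us + Us * Dop ((1 - X 1) * (1 - X 2)) = 0 := by
    rw [← Dop_mul, hU, Dop_one]
  rw [hA] at h0
  have h1 : ((1 - X 1) * (1 - X 2)) * Dop Us = Us * ((1 - X 1) * (1 - X 2) * (1 + X 2)) := by
    linear_combination h0
  calc Dop Us = (Us * ((1 - X 1) * (1 - X 2))) * Dop Us := by rw [mul_comm Us, hU, one_mul]
    _ = Us * (((1 - X 1) * (1 - X 2)) * Dop Us) := by ring
    _ = Us * (Us * ((1 - X 1) * (1 - X 2) * (1 + X 2))) := by rw [h1]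
    _ = (1 + X 2) * Us * (((1 - X 1) * (1 - X 2)) * Us) := by ring
    _ = (1 + X 2) * Us := by rw [hU, mul_one]

lemma Dop_subx : Dop subx = 0 := by
  rw [subx, Dop_mul, Dop_V, Dop_sub, Dop_X0, Dop_X1]
  ring

lemma Dop_suby : Dop suby = 0 := by
  rw [suby, Dop_mul, Dop_W, Dop_mul, Dop_one_sub_X1, Dop_X2]
  ring

lemma constCoeff_subx : (constantCoeff (σ := Fin 3) (R := ℂ)) subx = 0 := by
  rw [subx, map_mul, map_sub, constantCoeff_X, constantCoeff_X]
  ring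

lemma constCoeff_suby : (constantCoeff (σ := Fin 3) (R := ℂ)) suby = 0 := by
  rw [suby, map_mul, map_mul, constantCoeff_X]
  ring

/-- The truncation of the composition as an honest finite sum of power series. -/
noncomputable def trunc2 (H : MvPowerSeries (Fin 2) ℂ) (f g : MvPowerSeries (Fin 3) ℂ)
    (N : ℕ) : MvPowerSeries (Fin 3) ℂ :=
  ∑ p ∈ Finset.range (N + 1) ×ˢ Finset.range (N + 1),
    C (σ := Fin 3) (R := ℂ) (coeff (Finsupp.single 0 p.1 + Finsupp.single 1 p.2) H) *
      (f ^ p.1 * g ^ p.2)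

lemma coeff_comp2 (H : MvPowerSeries (Fin 2) ℂ) {f g : MvPowerSeries (Fin 3) ℂ}
    (hf : (constantCoeff (σ := Fin 3) (R := ℂ)) f = 0) (hg : (constantCoeff (σ := Fin 3) (R := ℂ)) g = 0)
    (m : Fin 3 →₀ ℕ) (N : ℕ) (hN : dg m ≤ N) :
    coeff m (comp2 H f g) = coeff m (trunc2 H f g N) := by
  have hc : coeff m (comp2 H f g) =
      ∑ p ∈ Finset.range (dg m + 1) ×ˢ Finset.range (dg m + 1),
        coeff (Finsupp.single 0 p.1 + Finsupp.single 1 p.2) H *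
          coeff m (f ^ p.1 * g ^ p.2) := rfl
  rw [hc, trunc2, map_sum]
  have hsub : Finset.range (dg m + 1) ×ˢ Finset.range (dg m + 1) ⊆
      Finset.range (N + 1) ×ˢ Finset.range (N + 1) := by
    apply Finset.product_subset_product <;> exact Finset.range_subset_range.mpr (by omega)
  rw [Finset.sum_subset hsub]
  · apply Finset.sum_congr rfl
    intro p _
    rw [coeff_C_mul]
  · intro p hp hnp
    simp only [Finset.mem_product, Finset.mem_range] at hp hnp
    have : dg m < p.1 + p.2 := by omega
    rw [coeff_pow_mul_pow hf hg this, mul_zero]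

/-- coefficients of `Dop f` only depend on coefficients of `f` up to one degree higher. -/
lemma coeff_Dop_congr {f g : MvPowerSeries (Fin 3) ℂ} (m : Fin 3 →₀ ℕ)
    (h : ∀ m' : Fin 3 →₀ ℕ, dg m' ≤ dg m + 1 → coeff m' f = coeff m' g) :
    coeff m (Dop f) = coeff m (Dop g) := by
  classical
  have key : ∀ (c : MvPowerSeries (Fin 3) ℂ) (i : Fin 3),
      coeff m (c * pderiv3 i f) = coeff m (c * pderiv3 i g) := by
    intro c i
    rw [coeff_mul, coeff_mul]
    apply Finset.sum_congr rfl
    rintro ⟨u, v⟩ hp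
    rw [Finset.HasAntidiagonal.mem_antidiagonal] at hp
    have hv : dg (v + Finsupp.single i 1) ≤ dg m + 1 := by
      have h1 : dg u + dg v = dg m := by rw [← dg_add, hp]
      rw [dg_add]
      have h2 : dg (Finsupp.single i 1) = 1 := by simp [dg]
      omega
    rw [coeff_pderiv3, coeff_pderiv3, h _ hv]
  simp only [Dop, map_add]
  rw [key _ 0, key _ 1, key _ 2]

lemma Dop_pow {f : MvPowerSeries (Fin 3) ℂ} (hf : Dop f = 0) (n : ℕ) :
    Dop (f ^ n) = 0 := by
  induction n with
  | zero => simpa using Dop_one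
  | succ n ih => rw [pow_succ, Dop_mul, ih, hf, mul_zero, mul_zero, add_zero]

lemma Dop_sum {s : Finset (ℕ × ℕ)} {f : ℕ × ℕ → MvPowerSeries (Fin 3) ℂ} :
    Dop (∑ p ∈ s, f p) = ∑ p ∈ s, Dop (f p) := by
  classical
  induction s using Finset.induction with
  | empty => simpa using Dop_zero
  | insert _ _ hns ih =>
    rw [Finset.sum_insert hns, Finset.sum_insert hns, Dop_add, ih]

lemma Dop_trunc2 (H : MvPowerSeries (Fin 2) ℂ) (N : ℕ) :
    Dop (trunc2 H subx suby N) = 0 := by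
  rw [trunc2, Dop_sum]
  apply Finset.sum_eq_zero
  intro p _
  rw [Dop_C_mul, Dop_mul, Dop_pow Dop_subx, Dop_pow Dop_suby, mul_zero, mul_zero, add_zero,
    mul_zero]

lemma Dop_comp2 (H : MvPowerSeries (Fin 2) ℂ) : Dop (comp2 H subx suby) = 0 := by
  apply MvPowerSeries.ext
  intro m
  have h1 : coeff m (Dop (comp2 H subx suby)) =
      coeff m (Dop (trunc2 H subx suby (dg m + 1))) := by
    apply coeff_Dop_congr
    intro m' hm'
    exact coeff_comp2 H constCoeff_subx constCoeff_suby m' _ hm'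
  rw [h1, Dop_trunc2]

/-- `FofH H` satisfies the PDE. -/
lemma Dop_FofH (H : MvPowerSeries (Fin 2) ℂ) : Dop (FofH H) = (1 + X 2) * FofH H := by
  rw [FofH, Dop_mul, Dop_comp2, mul_zero, zero_add]
  rw [show ((1 - X 1) * (1 - X 2))⁻¹ = Us from rfl, Dop_U]
  ring

/-- Coefficientwise projection killing all monomials containing variable `i`. -/
noncomputable def projFun (i : Fin 3) (f : MvPowerSeries (Fin 3) ℂ) :
    MvPowerSeries (Fin 3) ℂ :=
  fun m => if m i = 0 then f m else 0

lemma coeff_projFun (i : Fin 3) (f : MvPowerSeries (Fin 3) ℂ) (m : Fin 3 →₀ ℕ) :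
    coeff m (projFun i f) = if m i = 0 then coeff m f else 0 := rfl

lemma proj_one (i : Fin 3) : projFun i (1 : MvPowerSeries (Fin 3) ℂ) = 1 := by
  classical
  apply MvPowerSeries.ext
  intro m
  rw [coeff_projFun]
  by_cases h : m i = 0
  · rw [if_pos h]
  · rw [if_neg h, coeff_one, if_neg]
    intro h0; subst h0; simp at h

lemma proj_mul (i : Fin 3) (f g : MvPowerSeries (Fin 3) ℂ) :
    projFun i (f * g) = projFun i f * projFun i g := by
  classical
  apply MvPowerSeries.ext
  intro m
  rw [coeff_projFun, coeff_mul, coeff_mul]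
  by_cases h : m i = 0
  · rw [if_pos h]
    apply Finset.sum_congr rfl
    rintro ⟨u, v⟩ hp
    rw [Finset.HasAntidiagonal.mem_antidiagonal] at hp
    have huv : u i + v i = 0 := by rw [← Finsupp.add_apply, hp, h]
    rw [coeff_projFun, coeff_projFun, if_pos (by omega : u i = 0), if_pos (by omega : v i = 0)]
  · rw [if_neg h]
    symm
    apply Finset.sum_eq_zero
    rintro ⟨u, v⟩ hp
    rw [Finset.HasAntidiagonal.mem_antidiagonal] at hp
    have huv : u i + v i = m i := by rw [← Finsupp.add_apply, hp]
    rw [coeff_projFun, coeff_projFun]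
    rcases Nat.eq_zero_or_pos (u i) with hu | hu
    · rw [if_neg (by omega : ¬ v i = 0), mul_zero]
    · rw [if_neg (by omega : ¬ u i = 0), zero_mul]

lemma proj_pow (i : Fin 3) (f : MvPowerSeries (Fin 3) ℂ) (n : ℕ) :
    projFun i (f ^ n) = projFun i f ^ n := by
  induction n with
  | zero => simpa using proj_one i
  | succ n ih => rw [pow_succ, proj_mul, ih, pow_succ]

lemma proj_sub (i : Fin 3) (f g : MvPowerSeries (Fin 3) ℂ) :
    projFun i (f - g) = projFun i f - projFun i g := by
  apply MvPowerSeries.ext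
  intro m
  rw [coeff_projFun, map_sub, map_sub, coeff_projFun, coeff_projFun]
  by_cases h : m i = 0 <;> simp [h]

lemma proj_X_self (i : Fin 3) : projFun i (X i : MvPowerSeries (Fin 3) ℂ) = 0 := by
  classical
  apply MvPowerSeries.ext
  intro m
  rw [coeff_projFun, coeff_X, map_zero]
  by_cases h : m i = 0
  · rw [if_pos h, if_neg]
    intro h0
    subst h0
    simp at h
  · rw [if_neg h]

lemma proj_X_ne (i j : Fin 3) (hij : i ≠ j) :
    projFun i (X j : MvPowerSeries (Fin 3) ℂ) = X j := by
  classical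
  apply MvPowerSeries.ext
  intro m
  rw [coeff_projFun, coeff_X]
  by_cases h : m i = 0
  · rw [if_pos h]
  · rw [if_neg h, if_neg]
    intro h0
    subst h0
    simp [Finsupp.single_apply, Ne.symm hij] at h

lemma Ws_unique {h : MvPowerSeries (Fin 3) ℂ} (hh : (1 - X 2) * h = 1) : h = Ws :=
  calc h = ((1 - X 2) * Ws) * h := by rw [hW, one_mul]
    _ = Ws * ((1 - X 2) * h) := by ring
    _ = Ws := by rw [hh, mul_one]

lemma proj1_one_sub_X1 : projFun 1 (1 - X 1 : MvPowerSeries (Fin 3) ℂ) = 1 := by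
  rw [proj_sub, proj_one, proj_X_self, sub_zero]

lemma proj1_one_sub_X2 : projFun 1 (1 - X 2 : MvPowerSeries (Fin 3) ℂ) = 1 - X 2 := by
  rw [proj_sub, proj_one, proj_X_ne 1 2 (by decide)]

lemma proj1_V : projFun 1 Vs = 1 := by
  have h := congrArg (projFun 1) hV
  rw [proj_mul, proj_one, proj1_one_sub_X1, one_mul] at h
  exact h

lemma proj1_W : projFun 1 Ws = Ws := by
  have h := congrArg (projFun 1) hW
  rw [proj_mul, proj_one, proj1_one_sub_X2] at h
  exact Ws_unique h

lemma proj1_U : projFun 1 Us = Ws := by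
  have h := congrArg (projFun 1) hU
  rw [proj_mul, proj_mul, proj_one, proj1_one_sub_X1, proj1_one_sub_X2, one_mul] at h
  exact Ws_unique h

lemma proj0_W : projFun 0 Ws = Ws := by
  have h := congrArg (projFun 0) hW
  rw [proj_mul, proj_one, proj_sub, proj_one, proj_X_ne 0 2 (by decide)] at h
  exact Ws_unique h

lemma proj1_subx : projFun 1 subx = X 0 := by
  rw [subx, proj_mul, proj_sub, proj_X_ne 1 0 (by decide), proj_X_self]
  rw [show (1 - X 1 : MvPowerSeries (Fin 3) ℂ)⁻¹ = Vs from rfl, proj1_V]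
  ring

lemma proj1_suby : projFun 1 suby = X 2 * Ws := by
  rw [suby, proj_mul, proj_mul, proj_X_ne 1 2 (by decide), proj1_one_sub_X1]
  rw [show (1 - X 2 : MvPowerSeries (Fin 3) ℂ)⁻¹ = Ws from rfl, proj1_W]
  ring

lemma constCoeff_W : (constantCoeff (σ := Fin 3) (R := ℂ)) Ws = 1 := by
  have h := congrArg ((constantCoeff (σ := Fin 3) (R := ℂ))) hW
  rw [map_mul, map_one, constCoeff_one_sub_X, one_mul] at h
  exact h

noncomputable def ccoef (q k : ℕ) : ℂ := coeff (Finsupp.single 2 (k - q)) (Ws ^ (q + 1))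

lemma ccoef_self (k : ℕ) : ccoef k k = 1 := by
  rw [ccoef, Nat.sub_self, Finsupp.single_zero, coeff_zero_eq_constantCoeff, map_pow,
    constCoeff_W, one_pow]

lemma dg_single (j : Fin 3) (n : ℕ) : dg (Finsupp.single j n) = n := by
  simp [dg]

lemma coeff_W_vanish (m' : Fin 3 →₀ ℕ) (hm : m' 0 ≠ 0) (r : ℕ) :
    coeff m' (Ws ^ r) = 0 := by
  have h : Ws ^ r = projFun 0 (Ws ^ r) := by rw [proj_pow, proj0_W]
  rw [h, coeff_projFun, if_neg hm]

lemma monomial_le_iff (p q i k : ℕ) :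
    (Finsupp.single 0 p + Finsupp.single 2 q : Fin 3 →₀ ℕ) ≤
      Finsupp.single 0 i + Finsupp.single 2 k ↔ p ≤ i ∧ q ≤ k := by
  rw [Finsupp.le_def]
  constructor
  · intro h
    have h0 := h 0
    have h2 := h 2
    simp [Finsupp.add_apply, Finsupp.single_apply] at h0 h2
    exact ⟨h0, h2⟩
  · rintro ⟨h0, h2⟩ a
    fin_cases a <;> simp [Finsupp.add_apply, Finsupp.single_apply] <;> omega

lemma monomial_sub (p q i k : ℕ) (hp : p ≤ i) (hq : q ≤ k) :
    (Finsupp.single 0 i + Finsupp.single 2 k : Fin 3 →₀ ℕ) -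
      (Finsupp.single 0 p + Finsupp.single 2 q) =
      Finsupp.single 0 (i - p) + Finsupp.single 2 (k - q) := by
  ext a
  rw [Finsupp.tsub_apply]
  fin_cases a <;> simp [Finsupp.add_apply, Finsupp.single_apply]

/-- The key monomial coefficient. -/
lemma coeff_monomial_term (p q i k : ℕ) :
    coeff (Finsupp.single 0 i + Finsupp.single 2 k)
      ((X 0 : MvPowerSeries (Fin 3) ℂ) ^ p * X 2 ^ q * Ws ^ (q + 1)) =
      if p = i ∧ q ≤ k then ccoef q k else 0 := by
  classical
  have hmon : (X 0 : MvPowerSeries (Fin 3) ℂ) ^ p * X 2 ^ q =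
      monomial (Finsupp.single 0 p + Finsupp.single 2 q) 1 := by
    rw [X_pow_eq, X_pow_eq, monomial_mul_monomial, one_mul]
  rw [hmon, coeff_monomial_mul]
  by_cases hle : (Finsupp.single 0 p + Finsupp.single 2 q : Fin 3 →₀ ℕ) ≤
      Finsupp.single 0 i + Finsupp.single 2 k
  · rw [if_pos hle, one_mul]
    obtain ⟨hp, hq⟩ := (monomial_le_iff p q i k).mp hle
    rw [monomial_sub p q i k hp hq]
    by_cases hpi : p = i
    · subst hpi
      rw [Nat.sub_self, Finsupp.single_zero, zero_add, if_pos ⟨rfl, hq⟩]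
      rfl
    · rw [if_neg (by tauto), coeff_W_vanish]
      simp [Finsupp.add_apply, Finsupp.single_apply]
      omega
  · rw [if_neg hle, if_neg]
    rintro ⟨hp, hq⟩
    exact hle ((monomial_le_iff _ _ _ _).mpr ⟨le_of_eq hp, hq⟩)

lemma coeff_FofH_row0 (H : MvPowerSeries (Fin 2) ℂ) (i k : ℕ) :
    coeff (Finsupp.single 0 i + Finsupp.single 2 k) (FofH H) =
      ∑ q ∈ Finset.range (k + 1),
        coeff (Finsupp.single 0 i + Finsupp.single 1 q) H * ccoef q k := by
  classical
  set m : Fin 3 →₀ ℕ := Finsupp.single 0 i + Finsupp.single 2 k with hm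
  have hm1 : m 1 = 0 := by simp [hm, Finsupp.add_apply, Finsupp.single_apply]
  have hdg : dg m = i + k := by rw [hm, dg_add, dg_single, dg_single]
  set N : ℕ := i + k with hN
  set T'' : MvPowerSeries (Fin 3) ℂ :=
    ∑ p ∈ Finset.range (N + 1) ×ˢ Finset.range (N + 1),
      C (σ := Fin 3) (R := ℂ) (coeff (Finsupp.single 0 p.1 + Finsupp.single 1 p.2) H) *
        ((X 0 : MvPowerSeries (Fin 3) ℂ) ^ p.1 * (X 2 * Ws) ^ p.2) with hT''
  have hA : coeff m (FofH H) = coeff m (Ws * T'') := by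
    rw [FofH, coeff_mul, coeff_mul]
    apply Finset.sum_congr rfl
    rintro ⟨u, v⟩ hp
    rw [Finset.HasAntidiagonal.mem_antidiagonal] at hp
    have hu1 : u 1 = 0 := by
      have : u 1 + v 1 = m 1 := by rw [← Finsupp.add_apply, hp]
      omega
    have hv1 : v 1 = 0 := by
      have : u 1 + v 1 = m 1 := by rw [← Finsupp.add_apply, hp]
      omega
    have hdgv : dg v ≤ N := by
      have : dg u + dg v = dg m := by rw [← dg_add, hp]
      omega
    have hu : coeff u (((1 - X 1) * (1 - X 2) : MvPowerSeries (Fin 3) ℂ)⁻¹) =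
        coeff u Ws := by
      have : coeff u Us = coeff u (projFun 1 Us) := by
        rw [coeff_projFun, if_pos hu1]
      rw [show ((1 - X 1) * (1 - X 2) : MvPowerSeries (Fin 3) ℂ)⁻¹ = Us from rfl, this, proj1_U]
    have hv : coeff v (comp2 H subx suby) = coeff v T'' := by
      rw [coeff_comp2 H constCoeff_subx constCoeff_suby v N hdgv, trunc2, hT'', map_sum, map_sum]
      apply Finset.sum_congr rfl
      intro p _
      rw [coeff_C_mul, coeff_C_mul]
      congr 1
      have hproj : coeff v (subx ^ p.1 * suby ^ p.2) =
          coeff v (projFun 1 (subx ^ p.1 * suby ^ p.2)) := by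
        rw [coeff_projFun, if_pos hv1]
      rw [hproj, proj_mul, proj_pow, proj_pow, proj1_subx, proj1_suby]
    rw [hu, hv]
  have hB : Ws * T'' = ∑ p ∈ Finset.range (N + 1) ×ˢ Finset.range (N + 1),
      C (σ := Fin 3) (R := ℂ) (coeff (Finsupp.single 0 p.1 + Finsupp.single 1 p.2) H) *
        ((X 0 : MvPowerSeries (Fin 3) ℂ) ^ p.1 * X 2 ^ p.2 * Ws ^ (p.2 + 1)) := by
    rw [hT'', Finset.mul_sum]
    apply Finset.sum_congr rfl
    intro p _
    ring
  rw [hA, hB, map_sum]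
  have hval : ∀ p ∈ Finset.range (N + 1) ×ˢ Finset.range (N + 1),
      coeff m (C (σ := Fin 3) (R := ℂ) (coeff (Finsupp.single 0 p.1 + Finsupp.single 1 p.2) H) *
        ((X 0 : MvPowerSeries (Fin 3) ℂ) ^ p.1 * X 2 ^ p.2 * Ws ^ (p.2 + 1))) =
      coeff (Finsupp.single 0 p.1 + Finsupp.single 1 p.2) H *
        (if p.1 = i ∧ p.2 ≤ k then ccoef p.2 k else 0) := by
    intro p _
    rw [coeff_C_mul, hm, coeff_monomial_term]
  rw [Finset.sum_congr rfl hval]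
  rw [← Finset.sum_subset
    (show ({i} ×ˢ Finset.range (k + 1) : Finset (ℕ × ℕ)) ⊆
        Finset.range (N + 1) ×ˢ Finset.range (N + 1) by
      apply Finset.product_subset_product
      · intro x hx
        rw [Finset.mem_singleton] at hx
        rw [Finset.mem_range]
        omega
      · exact Finset.range_subset_range.mpr (by omega))
    (by
      rintro ⟨p, q⟩ _ hnp
      simp only [Finset.mem_product, Finset.mem_singleton, Finset.mem_range] at hnp
      rw [if_neg (by omega), mul_zero])]
  rw [Finset.sum_product, Finset.sum_singleton]
  apply Finset.sum_congr rfl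
  intro q hq
  rw [Finset.mem_range] at hq
  rw [if_pos ⟨rfl, by omega⟩]

noncomputable def hcoef (F : MvPowerSeries (Fin 3) ℂ) (i : ℕ) : ℕ → ℂ
  | k => coeff (Finsupp.single 0 i + Finsupp.single 2 k) F -
      ∑ q ∈ (Finset.range k).attach, hcoef F i q * ccoef q k
  decreasing_by exact Finset.mem_range.mp q.2

lemma hcoef_eq (F : MvPowerSeries (Fin 3) ℂ) (i k : ℕ) :
    hcoef F i k = coeff (Finsupp.single 0 i + Finsupp.single 2 k) F -
      ∑ q ∈ Finset.range k, hcoef F i q * ccoef q k := by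
  rw [hcoef]
  congr 1
  rw [← Finset.sum_attach (Finset.range k) (fun q => hcoef F i q * ccoef q k)]

/-- The two-variable series built from `F`. -/
noncomputable def Hser (F : MvPowerSeries (Fin 3) ℂ) : MvPowerSeries (Fin 2) ℂ :=
  fun n => hcoef F (n 0) (n 1)

lemma coeff_Hser (F : MvPowerSeries (Fin 3) ℂ) (p q : ℕ) :
    coeff (Finsupp.single 0 p + Finsupp.single 1 q) (Hser F) = hcoef F p q := by
  have h0 : (Finsupp.single 0 p + Finsupp.single 1 q : Fin 2 →₀ ℕ) 0 = p := by
    simp [Finsupp.add_apply, Finsupp.single_apply]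
  have h1 : (Finsupp.single 0 p + Finsupp.single 1 q : Fin 2 →₀ ℕ) 1 = q := by
    simp [Finsupp.add_apply, Finsupp.single_apply]
  show hcoef F _ _ = hcoef F p q
  rw [h0, h1]

/-- At `w₂`-degree 0, `FofH (Hser F)` has the same coefficients as `F`. -/
lemma coeff_FofH_Hser (F : MvPowerSeries (Fin 3) ℂ) (i k : ℕ) :
    coeff (Finsupp.single 0 i + Finsupp.single 2 k) (FofH (Hser F)) =
      coeff (Finsupp.single 0 i + Finsupp.single 2 k) F := by
  rw [coeff_FofH_row0]
  have hs : ∀ q, coeff (Finsupp.single 0 i + Finsupp.single 1 q) (Hser F) = hcoef F i q :=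
    fun q => coeff_Hser F i q
  rw [Finset.sum_congr rfl (fun q _ => by rw [hs q]), Finset.sum_range_succ, ccoef_self,
    mul_one, hcoef_eq]
  ring

lemma coeff_X_mul3 (j : Fin 3) (f : MvPowerSeries (Fin 3) ℂ) (m : Fin 3 →₀ ℕ) :
    coeff m (X j * f) =
      if m j = 0 then 0 else coeff (m - Finsupp.single j 1) f := by
  classical
  rw [show (X j : MvPowerSeries (Fin 3) ℂ) = monomial (Finsupp.single j 1) 1 from rfl,
    coeff_monomial_mul]
  by_cases h : m j = 0
  · rw [if_neg, if_pos h]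
    rw [Finsupp.single_le_iff]
    omega
  · rw [if_pos, if_neg h, one_mul]
    rw [Finsupp.single_le_iff]
    omega

lemma coeff_X_sq_mul3 (j : Fin 3) (f : MvPowerSeries (Fin 3) ℂ) (m : Fin 3 →₀ ℕ) :
    coeff m ((X j) ^ 2 * f) =
      if m j < 2 then 0 else coeff (m - Finsupp.single j 2) f := by
  classical
  rw [X_pow_eq, coeff_monomial_mul]
  by_cases h : m j < 2
  · rw [if_neg, if_pos h]
    rw [Finsupp.single_le_iff]
    omega
  · rw [if_pos, if_neg h, one_mul]
    rw [Finsupp.single_le_iff]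
    omega

theorem pde_implies_FofH' (F : MvPowerSeries (Fin 3) ℂ)
    (hF : (1 - X 0) * pderiv3 0 F + (1 - X 1) * pderiv3 1 F +
        X 2 * (1 - X 2) * pderiv3 2 F = (1 + X 2) * F) :
    F = FofH (Hser F) := by
  classical
  set E : MvPowerSeries (Fin 3) ℂ := F - FofH (Hser F) with hE_def
  have hDopF : Dop F = (1 + X 2) * F := hF
  have hE : Dop E = (1 + X 2) * E := by
    rw [hE_def, Dop_sub, hDopF, Dop_FofH]
    ring
  have base : ∀ m : Fin 3 →₀ ℕ, m 1 = 0 → coeff m E = 0 := by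
    intro m hm1
    have hm : m = Finsupp.single 0 (m 0) + Finsupp.single 2 (m 2) := by
      ext a
      fin_cases a <;> simp [Finsupp.add_apply, Finsupp.single_apply] <;> omega
    rw [hE_def, map_sub, hm, coeff_FofH_Hser, sub_self]
  have claim : ∀ j : ℕ, ∀ m : Fin 3 →₀ ℕ, m 1 ≤ j → coeff m E = 0 := by
    intro j
    induction j with
    | zero => intro m hm; exact base m (by omega)
    | succ j ih =>
      intro m hm
      by_cases hj : m 1 ≤ j
      · exact ih m hj
      have hm1 : m 1 = j + 1 := by omega
      set m' : Fin 3 →₀ ℕ := m - Finsupp.single 1 1 with hm'_def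
      have hm'1 : m' 1 = j := by
        rw [hm'_def]
        simp [Finsupp.tsub_apply, Finsupp.single_apply, hm1]
      have hm'add : m' + Finsupp.single 1 1 = m := by
        ext a
        rw [Finsupp.add_apply, hm'_def, Finsupp.tsub_apply, Finsupp.single_apply]
        by_cases ha : a = 1
        · subst ha; simp [hm1]
        · simp [Ne.symm ha, ha]
      have hcoeff := congrArg (coeff m') hE
      have hexp : Dop E = pderiv3 0 E - X 0 * pderiv3 0 E +
          (pderiv3 1 E - X 1 * pderiv3 1 E) +
          (X 2 * pderiv3 2 E - (X 2) ^ 2 * pderiv3 2 E) := by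
        rw [Dop]; ring
      have hrhs : ((1 + X 2) * E : MvPowerSeries (Fin 3) ℂ) = E + X 2 * E := by ring
      rw [hexp, hrhs] at hcoeff
      simp only [map_add, map_sub] at hcoeff
      -- now kill all terms whose 1-coordinate is ≤ j
      have e1 : coeff m' (pderiv3 0 E) = 0 := by
        rw [coeff_pderiv3, ih _ (by
          simp [Finsupp.add_apply, Finsupp.single_apply, hm'1]), mul_zero]
      have e2 : coeff m' (X 0 * pderiv3 0 E) = 0 := by
        rw [coeff_X_mul3]
        by_cases h : m' 0 = 0
        · rw [if_pos h]
        · rw [if_neg h, coeff_pderiv3, ih _ (by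
            simp [Finsupp.add_apply, Finsupp.tsub_apply, Finsupp.single_apply, hm'1]), mul_zero]
      have e3 : coeff m' (pderiv3 1 E) = ((j : ℂ) + 1) * coeff m E := by
        rw [coeff_pderiv3, hm'1, hm'add]
      have e4 : coeff m' (X 1 * pderiv3 1 E) = 0 := by
        rw [coeff_X_mul3]
        by_cases h : m' 1 = 0
        · rw [if_pos h]
        · rw [if_neg h, coeff_pderiv3, ih _ ?_, mul_zero]
          have hv : ((m' - Finsupp.single 1 1 + Finsupp.single 1 1) : Fin 3 →₀ ℕ) 1 =
              m' 1 - 1 + 1 := by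
            simp [Finsupp.add_apply, Finsupp.tsub_apply, Finsupp.single_apply]
          omega
      have e5 : coeff m' (X 2 * pderiv3 2 E) = 0 := by
        rw [coeff_X_mul3]
        by_cases h : m' 2 = 0
        · rw [if_pos h]
        · rw [if_neg h, coeff_pderiv3, ih _ (by
            simp [Finsupp.add_apply, Finsupp.tsub_apply, Finsupp.single_apply, hm'1]), mul_zero]
      have e6 : coeff m' ((X 2) ^ 2 * pderiv3 2 E) = 0 := by
        rw [coeff_X_sq_mul3]
        by_cases h : m' 2 < 2
        · rw [if_pos h]
        · rw [if_neg h, coeff_pderiv3, ih _ (by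
            simp [Finsupp.add_apply, Finsupp.tsub_apply, Finsupp.single_apply, hm'1]), mul_zero]
      have e7 : coeff m' E = 0 := ih _ (by omega)
      have e8 : coeff m' (X 2 * E) = 0 := by
        rw [coeff_X_mul3]
        by_cases h : m' 2 = 0
        · rw [if_pos h]
        · rw [if_neg h, ih _ (by
            simp [Finsupp.tsub_apply, Finsupp.single_apply, hm'1])]
      rw [e1, e2, e3, e4, e5, e6, e7, e8] at hcoeff
      have hj1 : ((j : ℂ) + 1) ≠ 0 := by
        have h1 : ((j + 1 : ℕ) : ℂ) ≠ 0 := Nat.cast_ne_zero.mpr (Nat.succ_ne_zero j)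
        push_cast at h1
        exact h1
      have : ((j : ℂ) + 1) * coeff m E = 0 := by linear_combination hcoeff
      exact (mul_eq_zero.mp this).resolve_left hj1
  have hE0 : E = 0 := by
    apply MvPowerSeries.ext
    intro m
    rw [map_zero]
    exact claim (m 1) m le_rfl
  rw [← sub_eq_zero]
  exact hE0


/-- Conversely, if `F` satisfies the PDE
`(1-w₁)F_{w₁} + (1-w₂)F_{w₂} + w₃(1-w₃)F_{w₃} = (1+w₃)F`, then there is a two-variable
power series `H(x,y)` with `F = H((w₁-w₂)/(1-w₂), w₃(1-w₂)/(1-w₃))/((1-w₂)(1-w₃))`. -/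
theorem pde_implies_FofH (F : MvPowerSeries (Fin 3) ℂ)
    (hF : (1 - X 0) * pderiv3 0 F + (1 - X 1) * pderiv3 1 F +
        X 2 * (1 - X 2) * pderiv3 2 F = (1 + X 2) * F) :
    ∃ H : MvPowerSeries (Fin 2) ℂ, F = FofH H := by
  exact ⟨Hser F, pde_implies_FofH' F hF⟩
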